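/- arXiv:2012.13787 — 2 statements merged into one kernel-verified Lean document; each statement's English description precedes it below -/
import Mathlib

section
/- Let X₁, …, X_k be independent real-valued random variables, each with a continuous (atomless) cumulative distribution function, and let P be a nonzero polynomial in k variables with real coefficients and finite degree. Then Pr{P(X₁, …, X_k) = 0} = 0. -/
open MeasureTheory ProbabilityTheory

/-- Auxiliary lemma: the zero set of a nonzero multivariate polynomial is null
for a product of atomless probability measures on `ℝ`. -/
lemma pi_poly_zero : ∀ (k : ℕ) (ν : Fin k → Measure ℝ),
    (∀ i, IsProbabilityMeasure (ν i)) → (∀ i x, ν i {x} = 0) →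
    ∀ P : MvPolynomial (Fin k) ℝ, P ≠ 0 →
    Measure.pi ν {x | MvPolynomial.eval x P = 0} = 0 := by
  intro k
  induction k with
  | zero =>
    intro ν _ _ P hP
    obtain ⟨r, rfl⟩ := MvPolynomial.C_surjective (Fin 0) P
    have hr : r ≠ 0 := fun h => hP (by simp [h])
    have : {x : Fin 0 → ℝ | MvPolynomial.eval x (MvPolynomial.C r) = 0} = ∅ := by
      ext x; simp [hr]
    rw [this]; simp
  | succ k IH =>
    intro ν hprob hatom P hP
    haveI := hprob
    haveI : ∀ i, SigmaFinite (ν i) := fun i => inferInstance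
    haveI : NullSingletonClass (ν 0) := ⟨hatom 0⟩
    set e := MvPolynomial.finSuccEquiv ℝ k P with he
    have hne : e ≠ 0 := by
      intro h
      apply hP
      apply (MvPolynomial.finSuccEquiv ℝ k).injective
      rw [← he, h, map_zero]
    have hlead : e.leadingCoeff ≠ 0 := Polynomial.leadingCoeff_ne_zero.mpr hne
    set ν' : Fin k → Measure ℝ := fun j => ν ((0 : Fin (k + 1)).succAbove j) with hν'
    have hB := IH ν' (fun j => hprob _) (fun j x => hatom _ x) e.leadingCoeff hlead
    set S := {x : Fin (k + 1) → ℝ | MvPolynomial.eval x P = 0} with hS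
    have hSmeas : MeasurableSet S :=
      (MvPolynomial.continuous_eval (p := P)).measurable (measurableSet_singleton 0)
    set f := MeasurableEquiv.piFinSuccAbove (fun _ : Fin (k + 1) => ℝ) 0 with hf
    have hMP := MeasureTheory.measurePreserving_piFinSuccAbove ν 0
    have hT : MeasurableSet (f.symm ⁻¹' S) := f.symm.measurable hSmeas
    have key : ((ν 0).prod (Measure.pi ν')) (f.symm ⁻¹' S) = Measure.pi ν S :=
      (hMP.symm f).measure_preimage hSmeas.nullMeasurableSet
    rw [← key, Measure.prod_apply_symm hT]
    have hcons : ∀ (a : ℝ) (y : Fin k → ℝ), f.symm (a, y) = Fin.cons a y := by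
      intro a y
      ext i
      induction i using Fin.cases with
      | zero => simp [hf, MeasurableEquiv.piFinSuccAbove]
      | succ j => simp [hf, MeasurableEquiv.piFinSuccAbove, Fin.zero_succAbove]
    have hsec : ∀ y : Fin k → ℝ, MvPolynomial.eval y e.leadingCoeff ≠ 0 →
        ν 0 ((fun a => (a, y)) ⁻¹' (f.symm ⁻¹' S)) = 0 := by
      intro y hy
      set Q : Polynomial ℝ := Polynomial.map (MvPolynomial.eval y) e with hQ
      have hQne : Q ≠ 0 := by
        intro h
        apply hy
        have : Q.coeff e.natDegree = MvPolynomial.eval y (e.coeff e.natDegree) :=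
          Polynomial.coeff_map _ _
        rw [h, Polynomial.coeff_zero] at this
        rw [Polynomial.leadingCoeff]
        exact this.symm
      have hsub : ((fun a => (a, y)) ⁻¹' (f.symm ⁻¹' S)) ⊆ {a : ℝ | Q.IsRoot a} := by
        intro a ha
        have : MvPolynomial.eval (f.symm (a, y)) P = 0 := ha
        rw [hcons a y, MvPolynomial.eval_eq_eval_mv_eval'] at this
        exact this
      exact measure_mono_null hsub ((Polynomial.finite_setOf_isRoot hQne).countable.measure_zero _)
    have hae : (fun y => ν 0 ((fun a => (a, y)) ⁻¹' (f.symm ⁻¹' S)))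
        =ᵐ[Measure.pi ν'] 0 := by
      have hBc : ∀ᵐ y ∂(Measure.pi ν'), MvPolynomial.eval y e.leadingCoeff ≠ 0 := by
        rw [ae_iff]
        simpa using hB
      filter_upwards [hBc] with y hy
      exact hsec y hy
    rw [lintegral_congr_ae hae]
    simp

/-- If `X 1, …, X k` are independent real random variables, each with a continuous
(atomless) cumulative distribution function, and `P` is a nonzero real polynomial in
`k` variables, then `P(X 1, …, X k) = 0` with probability zero. -/
theorem polynomial_zero_prob_zero
    {Ω : Type*} [MeasurableSpace Ω] (μ : Measure Ω) [IsProbabilityMeasure μ]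
    (k : ℕ) (X : Fin k → Ω → ℝ) (hmeas : ∀ i, Measurable (X i))
    (hindep : iIndepFun X μ)
    (hcont : ∀ i (x : ℝ), μ {ω | X i ω = x} = 0)
    (P : MvPolynomial (Fin k) ℝ) (hP : P ≠ 0) :
    μ {ω | MvPolynomial.eval (fun i => X i ω) P = 0} = 0 := by
  set ν : Fin k → Measure ℝ := fun i => Measure.map (X i) μ with hν
  haveI : ∀ i, IsProbabilityMeasure (ν i) := fun i =>
    Measure.isProbabilityMeasure_map (hmeas i).aemeasurable
  haveI : ∀ i, SigmaFinite (ν i) := fun i => inferInstance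
  have hatom : ∀ i x, ν i {x} = 0 := by
    intro i x
    rw [hν]
    rw [Measure.map_apply (hmeas i) (measurableSet_singleton x)]
    exact hcont i x
  have hφ : Measurable (fun ω (i : Fin k) => X i ω) := measurable_pi_lambda _ hmeas
  have hmap : Measure.map (fun ω (i : Fin k) => X i ω) μ = Measure.pi ν := by
    refine (Measure.pi_eq fun s hs => ?_).symm
    rw [Measure.map_apply hφ (MeasurableSet.univ_pi hs)]
    have hpre : (fun ω (i : Fin k) => X i ω) ⁻¹' Set.pi Set.univ s = ⋂ i, X i ⁻¹' s i := by
      ext ω; simp [Set.mem_pi]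
    rw [hpre, hindep.meas_iInter (fun i => ⟨s i, hs i, rfl⟩)]
    exact Finset.prod_congr rfl fun i _ =>
      (Measure.map_apply (hmeas i) (hs i)).symm
  have hSmeas : MeasurableSet {x : Fin k → ℝ | MvPolynomial.eval x P = 0} :=
    (MvPolynomial.continuous_eval (p := P)).measurable (measurableSet_singleton 0)
  have := pi_poly_zero k ν inferInstance hatom P hP
  calc μ {ω | MvPolynomial.eval (fun i => X i ω) P = 0}
      = Measure.map (fun ω (i : Fin k) => X i ω) μ {x | MvPolynomial.eval x P = 0} := by
        rw [Measure.map_apply hφ hSmeas]; rfl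
    _ = 0 := by rw [hmap]; exact this
end

section
/- Let P⁽¹⁾, …, P⁽ᴶ⁾ be nonzero, linearly independent rational functions (quotients of polynomials with nonzero denominator) in a finite family of variables, and let 𝒳₁, …, 𝒳_J be J disjoint copies of those variables. Then the determinant of the J×J matrix A with entries A_{i,j} = P⁽ʲ⁾(𝒳_i) is a nonzero rational function of the combined variables. -/
open MvPolynomial

lemma aux_exists_points {X : Type*} {J : ℕ} (f : Fin J → X → ℝ)
    (hf : LinearIndependent ℝ f) :
    ∃ x : Fin J → X, (Matrix.of fun i j : Fin J => f j (x i)).det ≠ 0 := by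
  classical
  set v : X → (Fin J → ℝ) := fun x j => f j x with hv
  have hspan : Submodule.span ℝ (Set.range v) = ⊤ := by
    by_contra h
    obtain ⟨g, hg0, hg⟩ := Submodule.exists_dual_map_eq_bot_of_lt_top
      (lt_top_iff_ne_top.2 h) inferInstance
    have hgv : ∀ x, g (v x) = 0 := by
      intro x
      have : g (v x) ∈ Submodule.map g (Submodule.span ℝ (Set.range v)) :=
        Submodule.mem_map_of_mem (Submodule.subset_span (Set.mem_range_self x))
      simpa [hg] using this
    have hsum : ∑ j, g (Pi.single j 1) • f j = 0 := by
      funext x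
      have h1 : v x = ∑ j, (v x j) • (Pi.single j (1:ℝ) : Fin J → ℝ) := by
        ext j; simp [Pi.single_apply, Finset.sum_apply]
      have := hgv x
      rw [h1] at this
      simpa [map_sum, mul_comm, hv] using this
    have hzero := Fintype.linearIndependent_iff.1 hf _ hsum
    apply hg0
    apply (Pi.basisFun ℝ (Fin J)).ext
    intro i
    simpa [Pi.basisFun_apply] using hzero i
  obtain ⟨b, hbsub, hbspan, hbli⟩ := exists_linearIndependent ℝ (Set.range v)
  rw [hspan] at hbspan
  let B : Module.Basis b ℝ (Fin J → ℝ) := Module.Basis.mk hbli (by rw [Subtype.range_coe, hbspan])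
  have : Fintype b := FiniteDimensional.fintypeBasisIndex B
  have hcard : Fintype.card b = J := by
    have := Module.finrank_eq_card_basis B
    simpa using this.symm
  let e : Fin J ≃ b := (Fintype.equivFinOfCardEq hcard).symm
  choose y hy using fun t : b => (hbsub t.2 : (t : Fin J → ℝ) ∈ Set.range v)
  refine ⟨fun i => y (e i), ?_⟩
  have hrows : (fun i => (Matrix.of fun i j : Fin J => f j (y (e i) )) i)
      = fun i => (B.reindex e.symm) i := by
    funext i
    have := hy (e i)
    simp only [Module.Basis.reindex_apply, Equiv.symm_symm, B, Module.Basis.mk_apply]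
    funext j
    exact congrFun this j ▸ rfl
  have hli : LinearIndependent ℝ (fun i => (Matrix.of fun i j : Fin J => f j (y (e i))) i) := by
    rw [hrows]; exact (B.reindex e.symm).linearIndependent
  have := Matrix.linearIndependent_rows_iff_isUnit.1 hli
  rw [Matrix.isUnit_iff_isUnit_det] at this
  exact this.ne_zero

lemma aux_det_rename_ne_zero {σ : Type*} [Fintype σ] {J : ℕ} (p : Fin J → MvPolynomial σ ℝ)
    (hli : LinearIndependent ℝ p) :
    (Matrix.of fun i j : Fin J =>
      rename (fun s => (s, i)) (p j)).det ≠ (0 : MvPolynomial (σ × Fin J) ℝ) := by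
  classical
  let E : MvPolynomial σ ℝ →ₗ[ℝ] ((σ → ℝ) → ℝ) :=
    { toFun := fun q x => eval x q
      map_add' := by intro a b; funext x; simp
      map_smul' := by intro c a; funext x; simp }
  have hinj : Function.Injective E := by
    intro a b h
    exact MvPolynomial.funext fun x => congrFun h x
  have hfun : LinearIndependent ℝ (fun j => E (p j)) :=
    hli.map' E (LinearMap.ker_eq_bot.2 hinj)
  obtain ⟨x, hx⟩ := aux_exists_points _ hfun
  intro h
  apply hx
  have h2 := congrArg (eval (fun q : σ × Fin J => x q.2 q.1)) h
  rw [map_zero, RingHom.map_det] at h2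
  rw [← h2]
  congr 1
  ext i j
  simp [Matrix.map_apply, eval_rename, Function.comp_def, E]


/-- Let `P 1, …, P J` be nonzero, linearly independent rational functions in a finite
family of variables `σ`, and for each `i` let `φ i` be the embedding of rational
functions in the variables `σ` into rational functions in the combined variables
`σ × Fin J` which substitutes, for each variable `s`, the `i`-th copy `(s, i)`.
Then the determinant of the `J × J` matrix with entries `φ i (P j)` is a nonzero
rational function of the combined variables. -/
theorem det_of_rational_functions_on_disjoint_copies_ne_zero
    (σ : Type*) [Fintype σ] (J : ℕ)
    (P : Fin J → FractionRing (MvPolynomial σ ℝ))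
    (hP0 : ∀ j, P j ≠ 0)
    (hPli : LinearIndependent ℝ P)
    (φ : Fin J →
      (FractionRing (MvPolynomial σ ℝ) →+* FractionRing (MvPolynomial (σ × Fin J) ℝ)))
    (hφ : ∀ (i : Fin J) (p : MvPolynomial σ ℝ),
      φ i (algebraMap (MvPolynomial σ ℝ) (FractionRing (MvPolynomial σ ℝ)) p) =
        algebraMap (MvPolynomial (σ × Fin J) ℝ) (FractionRing (MvPolynomial (σ × Fin J) ℝ))
          (MvPolynomial.rename (fun s => (s, i)) p)) :
    Matrix.det (Matrix.of fun i j : Fin J => φ i (P j)) ≠ 0 := by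
  classical
  obtain ⟨d, hd⟩ := IsLocalization.exist_integer_multiples_of_finite
    (nonZeroDivisors (MvPolynomial σ ℝ)) P
  choose p hp using hd
  have hdne : (d : MvPolynomial σ ℝ) ≠ 0 := nonZeroDivisors.ne_zero d.2
  have hdK : algebraMap (MvPolynomial σ ℝ) (FractionRing (MvPolynomial σ ℝ)) (d : MvPolynomial σ ℝ) ≠ 0 :=
    (map_ne_zero_iff _ (IsFractionRing.injective _ _)).2 hdne
  have hsmul : ∀ j, algebraMap (MvPolynomial σ ℝ) (FractionRing (MvPolynomial σ ℝ)) (p j)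
      = algebraMap (MvPolynomial σ ℝ) (FractionRing (MvPolynomial σ ℝ)) (d : MvPolynomial σ ℝ) * P j := by
    intro j
    rw [hp j, Algebra.smul_def]
  have hpli : LinearIndependent ℝ p := by
    rw [Fintype.linearIndependent_iff]
    intro c hc
    have h1 : ∑ j, (c j • (algebraMap (MvPolynomial σ ℝ) (FractionRing (MvPolynomial σ ℝ))
        (d : MvPolynomial σ ℝ) * P j)) = 0 := by
      calc ∑ j, c j • (algebraMap (MvPolynomial σ ℝ) (FractionRing (MvPolynomial σ ℝ))
            (d : MvPolynomial σ ℝ) * P j)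
          = ∑ j, algebraMap (MvPolynomial σ ℝ) (FractionRing (MvPolynomial σ ℝ)) (c j • p j) := by
            refine Finset.sum_congr rfl fun j _ => ?_
            have hRsmul : algebraMap (MvPolynomial σ ℝ) (FractionRing (MvPolynomial σ ℝ)) (c j • p j)
                = c j • algebraMap (MvPolynomial σ ℝ) (FractionRing (MvPolynomial σ ℝ)) (p j) := by
              have := map_smul (IsScalarTower.toAlgHom ℝ (MvPolynomial σ ℝ)
                (FractionRing (MvPolynomial σ ℝ))).toLinearMap (c j) (p j)
              simp only [AlgHom.toLinearMap_apply, IsScalarTower.coe_toAlgHom'] at this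
              exact this
            rw [hRsmul, hsmul j]
        _ = 0 := by rw [← map_sum, hc, map_zero]
    have h2 : algebraMap (MvPolynomial σ ℝ) (FractionRing (MvPolynomial σ ℝ)) (d : MvPolynomial σ ℝ)
        * (∑ j, c j • P j) = 0 := by
      rw [Finset.mul_sum, ← h1]
      exact Finset.sum_congr rfl fun j _ => mul_smul_comm _ _ _
    exact Fintype.linearIndependent_iff.1 hPli c ((mul_eq_zero.1 h2).resolve_left hdK)
  have key : ∀ i j : Fin J, algebraMap (MvPolynomial (σ × Fin J) ℝ)
      (FractionRing (MvPolynomial (σ × Fin J) ℝ)) (rename (fun s => (s, i)) (d : MvPolynomial σ ℝ)) *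
      φ i (P j)
        = algebraMap (MvPolynomial (σ × Fin J) ℝ) (FractionRing (MvPolynomial (σ × Fin J) ℝ))
          (rename (fun s => (s, i)) (p j)) := by
    intro i j
    rw [← hφ i, ← hφ i, ← map_mul, hsmul j]
  intro hdet
  apply aux_det_rename_ne_zero p hpli
  apply (map_eq_zero_iff _ (IsFractionRing.injective (MvPolynomial (σ × Fin J) ℝ)
    (FractionRing (MvPolynomial (σ × Fin J) ℝ)))).1
  rw [RingHom.map_det, RingHom.mapMatrix_apply]
  have heq : ((Matrix.of fun i j : Fin J =>
      rename (fun s => (s, i)) (p j)).map (algebraMap (MvPolynomial (σ × Fin J) ℝ)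
        (FractionRing (MvPolynomial (σ × Fin J) ℝ))))
      = Matrix.of fun i j : Fin J =>
        (algebraMap (MvPolynomial (σ × Fin J) ℝ) (FractionRing (MvPolynomial (σ × Fin J) ℝ))
          (rename (fun s => (s, i)) (d : MvPolynomial σ ℝ))) *
          (Matrix.of fun i j : Fin J => φ i (P j)) i j := by
    ext i j
    simp only [Matrix.map_apply, Matrix.of_apply]
    exact (key i j).symm
  rw [heq, Matrix.det_mul_column, hdet, mul_zero]
end
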